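/- Let g be a smooth Riemannian metric on an open set U ⊆ E, let f : E → ℝ be smooth with g-gradient G, let λ > 0 be a constant, and let Γ be a connection on U that straightens f with constant factor λ and whose non-metricity tensor C vanishes identically (i.e. Γ is a metric connection). Then: (i) every gradient descent curve γ of f with f (γ t) → 0 as t → ∞ satisfies f (γ t) = f (γ 0) * Real.exp (−2*λ*t) for all t ≥ 0; and (ii) consequently, for any two gradient descent curves γ₁, γ₂ with f (γ₁ 0) = f (γ₂ 0) and f ∘ γ₁, f ∘ γ₂ → 0 at infinity, one has f (γ₁ t) = f (γ₂ t) for all t ≥ 0, so no relaxation asymmetry can occur. -/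

import Mathlib

open scoped Topology

noncomputable section

/-- `E n` is the Euclidean space `ℝ^n`. -/
abbrev E (n : ℕ) := EuclideanSpace ℝ (Fin n)

set_option maxHeartbeats 1000000

/-- **Corollary (no asymmetry for metric straightening connections).**
If `f` admits a straightening connection with constant factor `λ > 0` whose non-metricity tensor
vanishes identically, then (i) every gradient descent curve `γ` of `f` relaxing to `0` satisfies
`f (γ t) = f (γ 0) · exp (−2λt)` for `t ≥ 0`, and (ii) any two such curves with `f`-equidistant
initial conditions satisfy `f (γ₁ t) = f (γ₂ t)` for all `t ≥ 0`: no asymmetry can occur. -/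
theorem no_asymmetry_of_metric_straightening
    (n : ℕ) (hn : 1 ≤ n)
    (U : Set (E n)) (hU : IsOpen U)
    -- a smooth Riemannian metric on `U`
    (g : E n → E n →L[ℝ] E n →L[ℝ] ℝ)
    (hg_smooth : ContDiffOn ℝ (⊤ : ℕ∞) g U)
    (hg_symm : ∀ x ∈ U, ∀ u v : E n, g x u v = g x v u)
    (hg_pos : ∀ x ∈ U, ∀ v : E n, v ≠ 0 → 0 < g x v v)
    -- a smooth function `f` with `g`-gradient `G`
    (f : E n → ℝ) (hf : ContDiff ℝ (⊤ : ℕ∞) f)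
    (G : E n → E n) (hG_smooth : ContDiffOn ℝ (⊤ : ℕ∞) G U)
    (hG : ∀ x ∈ U, ∀ v : E n, g x (G x) v = fderiv ℝ f x v)
    -- a constant factor `λ > 0`
    (lam : ℝ) (hlam : 0 < lam)
    -- a connection `Γ` on `U` straightening `f` with factor `λ`
    (Γ : E n → E n →L[ℝ] E n →L[ℝ] E n)
    (hΓ_smooth : ContDiffOn ℝ (⊤ : ℕ∞) Γ U)
    (hstr : ∀ x ∈ U, fderiv ℝ G x (G x) + Γ x (G x) (G x) = lam • G x)
    -- the non-metricity tensor `C` of `Γ` relative to `g`, vanishing identically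
    (C : E n → E n → E n → E n → ℝ)
    (hC : ∀ x ∈ U, ∀ w u v : E n,
      C x w u v = fderiv ℝ (fun y => g y u v) x w - g x (Γ x w u) v - g x u (Γ x w v))
    (hC_zero : ∀ x ∈ U, ∀ w u v : E n, C x w u v = 0) :
    -- (i) exponential relaxation along every gradient descent curve of `f` tending to `0`
    (∀ γ : ℝ → E n, (∀ t : ℝ, γ t ∈ U) → ContDiff ℝ 1 γ →
      (∀ t : ℝ, 0 ≤ t → deriv γ t = -G (γ t)) →
      Filter.Tendsto (fun t => f (γ t)) Filter.atTop (nhds 0) →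
      ∀ t : ℝ, 0 ≤ t → f (γ t) = f (γ 0) * Real.exp (-2 * lam * t)) ∧
    -- (ii) no relaxation asymmetry for `f`-equidistant gradient descent curves
    (∀ γ₁ γ₂ : ℝ → E n,
      (∀ t : ℝ, γ₁ t ∈ U) → (∀ t : ℝ, γ₂ t ∈ U) →
      ContDiff ℝ 1 γ₁ → ContDiff ℝ 1 γ₂ →
      (∀ t : ℝ, 0 ≤ t → deriv γ₁ t = -G (γ₁ t)) →
      (∀ t : ℝ, 0 ≤ t → deriv γ₂ t = -G (γ₂ t)) →
      f (γ₁ 0) = f (γ₂ 0) →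
      Filter.Tendsto (fun t => f (γ₁ t)) Filter.atTop (nhds 0) →
      Filter.Tendsto (fun t => f (γ₂ t)) Filter.atTop (nhds 0) →
      ∀ t : ℝ, 0 ≤ t → f (γ₁ t) = f (γ₂ t)) := by
  -- auxiliary facts independent of the curve
  have hgd : ∀ x ∈ U, HasFDerivAt g (fderiv ℝ g x) x := fun x hx =>
    ((hg_smooth.differentiableOn (by simp)).differentiableAt (hU.mem_nhds hx)).hasFDerivAt
  have hGd : ∀ x ∈ U, HasFDerivAt G (fderiv ℝ G x) x := fun x hx =>
    ((hG_smooth.differentiableOn (by simp)).differentiableAt (hU.mem_nhds hx)).hasFDerivAt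
  set h : E n → ℝ := fun y => g y (G y) (G y) with hh
  -- derivative of y ↦ g y u v
  have hguv : ∀ x ∈ U, ∀ u v w : E n,
      fderiv ℝ (fun y => g y u v) x w = (fderiv ℝ g x w) u v := by
    intro x hx u v w
    have H := (((hgd x hx).clm_apply (hasFDerivAt_const u x)).clm_apply
      (hasFDerivAt_const v x)).fderiv
    rw [H]
    simp
  -- metric compatibility from vanishing non-metricity
  have hmetric : ∀ x ∈ U, ∀ w u v : E n,
      (fderiv ℝ g x w) u v = g x (Γ x w u) v + g x u (Γ x w v) := by
    intro x hx w u v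
    have h1 := hC x hx w u v
    have h2 := hC_zero x hx w u v
    rw [h2] at h1
    rw [← hguv x hx u v w]
    linarith
  -- key derivative identity for h along U
  have hhd : ∀ x ∈ U, ∃ D : E n →L[ℝ] ℝ, HasFDerivAt h D x ∧ D (G x) = 2 * lam * h x := by
    intro x hx
    refine ⟨_, ((hgd x hx).clm_apply (hGd x hx)).clm_apply (hGd x hx), ?_⟩
    have hval : (((g x).comp (fderiv ℝ G x) + (fderiv ℝ g x).flip (G x)).flip (G x)
        + (((fun y => (g y) (G y)) x).comp (fderiv ℝ G x))) (G x)
        = 2 * lam * h x := by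
      simp only [ContinuousLinearMap.add_apply, ContinuousLinearMap.coe_comp',
        Function.comp_apply, ContinuousLinearMap.flip_apply]
      have e1 : (fderiv ℝ g x (G x)) (G x) (G x)
          = g x (Γ x (G x) (G x)) (G x) + g x (G x) (Γ x (G x) (G x)) :=
        hmetric x hx (G x) (G x) (G x)
      have e2 : g x (G x) (Γ x (G x) (G x)) = g x (Γ x (G x) (G x)) (G x) :=
        hg_symm x hx _ _
      have e3 : g x (G x) (fderiv ℝ G x (G x)) = g x (fderiv ℝ G x (G x)) (G x) :=
        hg_symm x hx _ _
      have e4 : g x (fderiv ℝ G x (G x) + Γ x (G x) (G x)) (G x) = lam * g x (G x) (G x) := by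
        rw [hstr x hx]; simp
      have e5 : g x (fderiv ℝ G x (G x)) (G x) + g x (Γ x (G x) (G x)) (G x)
          = lam * g x (G x) (G x) := by
        rw [← e4]; simp
      simp only [hh]
      linarith
    -- the derivative produced by clm_apply, evaluated at G x
    show ((((fun y => (g y) (G y)) x).comp (fderiv ℝ G x))
        + ((g x).comp (fderiv ℝ G x) + (fderiv ℝ g x).flip (G x)).flip (G x)) (G x)
        = 2 * lam * h x
    rw [← hval]
    simp only [ContinuousLinearMap.add_apply]
    ring
  have hfd : Differentiable ℝ f := hf.differentiable (by simp)
  -- main claim (i)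
  have key : ∀ γ : ℝ → E n, (∀ t : ℝ, γ t ∈ U) → ContDiff ℝ 1 γ →
      (∀ t : ℝ, 0 ≤ t → deriv γ t = -G (γ t)) →
      Filter.Tendsto (fun t => f (γ t)) Filter.atTop (nhds 0) →
      ∀ t : ℝ, 0 ≤ t → f (γ t) = f (γ 0) * Real.exp (-2 * lam * t) := by
    intro γ hγU hγC1 hγ' hγlim
    have hγdiff : Differentiable ℝ γ := hγC1.differentiable one_ne_zero
    -- ψ := h ∘ γ
    have hψall : ∀ t : ℝ, ∃ D : E n →L[ℝ] ℝ,
        HasDerivAt (fun s => h (γ s)) (D (deriv γ t)) t ∧ D (G (γ t)) = 2 * lam * h (γ t) := by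
      intro t
      obtain ⟨D, hD, hDval⟩ := hhd (γ t) (hγU t)
      exact ⟨D, hD.comp_hasDerivAt t (hγdiff t).hasDerivAt, hDval⟩
    have hψ : ∀ t : ℝ, 0 ≤ t →
        HasDerivAt (fun s => h (γ s)) (-(2 * lam * h (γ t))) t := by
      intro t ht
      obtain ⟨D, hD, hDval⟩ := hψall t
      rw [hγ' t ht] at hD
      simpa [hDval] using hD
    have hψcont : Continuous (fun s => h (γ s)) := by
      refine continuous_iff_continuousAt.2 fun t => ?_
      obtain ⟨D, hD, -⟩ := hψall t
      exact hD.continuousAt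
    have hφ : ∀ t : ℝ, 0 ≤ t →
        HasDerivAt (fun s => f (γ s)) (-(h (γ t))) t := by
      intro t ht
      have hD := (hfd (γ t)).hasFDerivAt.comp_hasDerivAt t (hγdiff t).hasDerivAt
      rw [hγ' t ht] at hD
      have : fderiv ℝ f (γ t) (-G (γ t)) = -(h (γ t)) := by
        rw [map_neg, ← hG (γ t) (hγU t)]
      rwa [this] at hD
    set ψ0 := h (γ 0) with hψ0
    -- solve ψ' = -2λψ
    have hψsol : ∀ t : ℝ, 0 ≤ t → h (γ t) = ψ0 * Real.exp (-(2 * lam) * t) := by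
      intro T hT
      set F : ℝ → ℝ := fun s => h (γ s) * Real.exp ((2 * lam) * s) with hF
      have hFder : ∀ s ∈ Set.Ico (0:ℝ) T, HasDerivWithinAt F 0 (Set.Ici s) s := by
        intro s hs
        have h2 : HasDerivAt (fun r => Real.exp ((2 * lam) * r))
            ((2 * lam) * Real.exp ((2 * lam) * s)) s := by
          simpa [mul_comm] using ((hasDerivAt_id s).const_mul (2 * lam)).exp
        have := (hψ s hs.1).mul h2
        have h0 : -(2 * lam * h (γ s)) * Real.exp (2 * lam * s)
            + h (γ s) * (2 * lam * Real.exp (2 * lam * s)) = 0 := by ring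
        rw [h0] at this
        exact this.hasDerivWithinAt
      have hFcont : ContinuousOn F (Set.Icc 0 T) :=
        (hψcont.mul (Real.continuous_exp.comp (continuous_const.mul continuous_id))).continuousOn
      have hconst := constant_of_has_deriv_right_zero hFcont hFder T ⟨hT, le_rfl⟩
      have hF0 : F 0 = ψ0 := by simp [hF, hψ0]
      have hFT : F T = h (γ T) * Real.exp ((2 * lam) * T) := rfl
      rw [hFT, hF0] at hconst
      have hne : Real.exp ((2 * lam) * T) ≠ 0 := Real.exp_ne_zero _
      field_simp [Real.exp_neg] at *
      rw [← hconst, mul_assoc, ← Real.exp_add]; simp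
    -- solve φ' = -ψ
    have hφsol : ∀ t : ℝ, 0 ≤ t → f (γ t)
        = f (γ 0) - ψ0 / (2 * lam) + ψ0 / (2 * lam) * Real.exp (-(2 * lam) * t) := by
      intro T hT
      set F : ℝ → ℝ := fun s => f (γ s) - ψ0 / (2 * lam) * Real.exp (-(2 * lam) * s) with hF
      have hFder : ∀ s ∈ Set.Ico (0:ℝ) T, HasDerivWithinAt F 0 (Set.Ici s) s := by
        intro s hs
        have h2 : HasDerivAt (fun r => Real.exp (-(2 * lam) * r))
            (-(2 * lam) * Real.exp (-(2 * lam) * s)) s := by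
          simpa [mul_comm] using ((hasDerivAt_id s).const_mul (-(2 * lam))).exp
        have h3 := (hφ s hs.1).sub (h2.const_mul (ψ0 / (2 * lam)))
        have h4 : h (γ s) = ψ0 * Real.exp (-(2 * lam) * s) := hψsol s hs.1
        have h0 : -(h (γ s)) - ψ0 / (2 * lam) * (-(2 * lam) * Real.exp (-(2 * lam) * s)) = 0 := by
          rw [h4]; field_simp; ring
        rw [h0] at h3
        exact h3.hasDerivWithinAt
      have hFcont : ContinuousOn F (Set.Icc 0 T) :=
        ((hf.continuous.comp hγC1.continuous).sub
          (continuous_const.mul (Real.continuous_exp.comp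
            (continuous_const.mul continuous_id)))).continuousOn
      have hconst := constant_of_has_deriv_right_zero hFcont hFder T ⟨hT, le_rfl⟩
      have hF0 : F 0 = f (γ 0) - ψ0 / (2 * lam) := by simp [hF]
      rw [hF0] at hconst
      have : f (γ T) - ψ0 / (2 * lam) * Real.exp (-(2 * lam) * T)
          = f (γ 0) - ψ0 / (2 * lam) := hconst
      linarith
    -- use the limit to identify ψ0 = 2λ f(γ 0)
    have hexp0 : Filter.Tendsto (fun t : ℝ => Real.exp (-(2 * lam) * t))
        Filter.atTop (nhds 0) := by
      have h1 : Filter.Tendsto (fun t : ℝ => (2 * lam) * t) Filter.atTop Filter.atTop :=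
        Filter.Tendsto.const_mul_atTop (by linarith) Filter.tendsto_id
      have h2 := Real.tendsto_exp_neg_atTop_nhds_zero.comp h1
      exact h2.congr fun t => by simp [Function.comp, neg_mul]
    have hlim2 : Filter.Tendsto
        (fun t : ℝ => f (γ 0) - ψ0 / (2 * lam) + ψ0 / (2 * lam) * Real.exp (-(2 * lam) * t))
        Filter.atTop (nhds (f (γ 0) - ψ0 / (2 * lam))) := by
      simpa using (hexp0.const_mul (ψ0 / (2 * lam))).const_add (f (γ 0) - ψ0 / (2 * lam))
    have heq : (fun t : ℝ => f (γ t)) =ᶠ[Filter.atTop]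
        (fun t : ℝ => f (γ 0) - ψ0 / (2 * lam) + ψ0 / (2 * lam) * Real.exp (-(2 * lam) * t)) :=
      Filter.eventually_atTop.2 ⟨0, fun t ht => hφsol t ht⟩
    have hzero : (0 : ℝ) = f (γ 0) - ψ0 / (2 * lam) :=
      tendsto_nhds_unique (hγlim.congr' heq) hlim2
    intro t ht
    rw [hφsol t ht, ← hzero]
    have : ψ0 / (2 * lam) = f (γ 0) := by linarith
    rw [this]
    ring_nf
  refine ⟨key, ?_⟩
  intro γ₁ γ₂ h1 h2 c1 c2 d1 d2 heq0 l1 l2 t ht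
  rw [key γ₁ h1 c1 d1 l1 t ht, key γ₂ h2 c2 d2 l2 t ht, heq0]


end
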